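/- (Example 1) Let L = ℕ ∪ {a, ∞} be the poset with order: x ≤ y if and only if x = y, or y = ∞, or x, y ∈ ℕ with x ≤ y in the natural order (so a is comparable only to itself and ∞). Define the net (x_n)_{n∈ℕ} by x_{2n} = n and x_{2n+1} = a, and let I_0 = {A ⊆ ℕ : ∃ k ∈ ℕ, A ∩ {m : k ≤ m} = ∅}. Then (x_n) GZS-converges to a with respect to I_0, but (x_n) does not IS-converge to a with respect to I_0. -/
import Mathlib


open Set

universe u v

variable {L : Type u}

/-- The upper set `↑A = {y : ∃ a ∈ A, a ≤ y}`. -/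
def upSet [Preorder L] (A : Set L) : Set L := {y | ∃ a ∈ A, a ≤ y}

/-- The lower set `↓A = {y : ∃ a ∈ A, y ≤ a}`. -/
def downSet [Preorder L] (A : Set L) : Set L := {y | ∃ a ∈ A, y ≤ a}

/-- An ideal on `J`: a family of subsets closed under subsets and finite unions. -/
def IsIdeal {J : Type v} (I : Set (Set J)) : Prop :=
  (∀ A ∈ I, ∀ B : Set J, B ⊆ A → B ∈ I) ∧ ∀ A ∈ I, ∀ B ∈ I, A ∪ B ∈ I

/-- A (nonempty) directed family of nonempty finite subsets of `L`. -/
def DirectedFamily [Preorder L] (𝓕 : Set (Set L)) : Prop :=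
  𝓕.Nonempty ∧ (∀ F ∈ 𝓕, F.Nonempty ∧ F.Finite) ∧
    ∀ E ∈ 𝓕, ∀ F ∈ 𝓕, ∃ H ∈ 𝓕, upSet H ⊆ upSet E ∩ upSet F

/-- A dcpo: every nonempty directed subset has a supremum. -/
def IsDcpo (L : Type u) [PartialOrder L] : Prop :=
  ∀ D : Set L, D.Nonempty → DirectedOn (· ≤ ·) D → ∃ s, IsLUB D s

/-- A net index: a nonempty directed preordered set. -/
def IsNetIndex (J : Type v) [Preorder J] : Prop :=
  Nonempty J ∧ ∀ a b : J, ∃ c, a ≤ c ∧ b ≤ c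

/-- The net `xj` GZS-converges (generalized ideal inf-limit) to `x` w.r.t. ideal `I`. -/
def GZSConv [Preorder L] {J : Type v} (xj : J → L) (I : Set (Set J)) (x : L) : Prop :=
  ∃ 𝓕 : Set (Set L), DirectedFamily 𝓕 ∧ (⋂ F ∈ 𝓕, upSet F) ⊆ upSet {x} ∧
    ∀ F ∈ 𝓕, {j | xj j ∉ upSet F} ∈ I

/-- The net `xj` IS-converges (ideal inf-limit) to `x` w.r.t. ideal `I`. -/
def ISConv [Preorder L] {J : Type v} (xj : J → L) (I : Set (Set J)) (x : L) : Prop :=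
  ∃ D : Set L, D.Nonempty ∧ DirectedOn (· ≤ ·) D ∧ (∃ s, IsLUB D s ∧ x ≤ s) ∧
    ∀ d ∈ D, {j | xj j ∉ upSet {d}} ∈ I

/-- `G ≪ x` for a set `G`: every nonempty directed `D` with `x ≤ sup D` meets `↑G`. -/
def WayBelowSet [Preorder L] (G : Set L) (x : L) : Prop :=
  ∀ D : Set L, D.Nonempty → DirectedOn (· ≤ ·) D →
    ∀ s, IsLUB D s → x ≤ s → (D ∩ upSet G).Nonempty

/-- Scott open set. -/
def ScottOpen [Preorder L] (U : Set L) : Prop :=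
  (∀ x ∈ U, ∀ y, x ≤ y → y ∈ U) ∧
    ∀ D : Set L, D.Nonempty → DirectedOn (· ≤ ·) D →
      ∀ s, IsLUB D s → s ∈ U → (D ∩ U).Nonempty

/-- `fin(x)`: the nonempty finite subsets way below `x`. -/
def finOf [Preorder L] (x : L) : Set (Set L) :=
  {F | F.Nonempty ∧ F.Finite ∧ WayBelowSet F x}

/-- Quasicontinuous domain. -/
def QuasicontinuousDomain (L : Type u) [PartialOrder L] : Prop :=
  IsDcpo L ∧ ∀ x : L, DirectedFamily (finOf x) ∧ upSet {x} = ⋂ F ∈ finOf x, upSet F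

/-- Ideal convergence of a net w.r.t. a topology `T`. -/
def IConv [Preorder L] {J : Type v} (T : TopologicalSpace L) (xj : J → L)
    (I : Set (Set J)) (x : L) : Prop :=
  ∀ U : Set L, T.IsOpen U → x ∈ U → {j | xj j ∉ U} ∈ I

/-- The net `xj` GS-converges (generalized inf-limit) to `x`. -/
def GSConv [Preorder L] {J : Type v} [Preorder J] (xj : J → L) (x : L) : Prop :=
  ∃ 𝓕 : Set (Set L), DirectedFamily 𝓕 ∧ (⋂ F ∈ 𝓕, upSet F) ⊆ upSet {x} ∧
    ∀ F ∈ 𝓕, ∃ k : J, ∀ j : J, k ≤ j → xj j ∈ upSet F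

/-- The generalized inf-limit topology `τ^{g-lim-inf}`. -/
def tauGLimInf (L : Type u) [PartialOrder L] : Set (Set L) :=
  {U | ∀ (J : Type u) [Preorder J], IsNetIndex J →
      ∀ xj : J → L, ∀ x ∈ U, GSConv xj x → ∃ k : J, ∀ j : J, k ≤ j → xj j ∈ U}

/-- The generalized ideal inf-limit topology `τ^{g-I-lim-inf}`. -/
def tauGILimInf (L : Type u) [PartialOrder L] : Set (Set L) :=
  {U | ∀ (J : Type u) [Preorder J], IsNetIndex J →
      ∀ (xj : J → L) (I : Set (Set J)), IsIdeal I →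
      ∀ x ∈ U, GZSConv xj I x → {j | xj j ∉ U} ∈ I}

/-- `x = glim_GZ (x_j)`: generalized ideal eventual-lower-bound limit. -/
def GlimGZ [Preorder L] {J : Type v} (xj : J → L) (I : Set (Set J)) (x : L) : Prop :=
  GZSConv xj I x ∧
    ∀ F : Set L, F.Nonempty → F.Finite → {j | xj j ∉ upSet F} ∈ I → x ∈ upSet F

/-- The generalized ideal eventual-lower-bound limit topology `τ^{g-I}`. -/
def tauGIlb (L : Type u) [PartialOrder L] : Set (Set L) :=
  {U | ∀ (J : Type u) [Preorder J], IsNetIndex J →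
      ∀ (xj : J → L) (I : Set (Set J)), IsIdeal I →
      ∀ x ∈ U, GlimGZ xj I x → {j | xj j ∉ U} ∈ I}

/-- The Scott topology `σ(L)`. -/
def scottTop (L : Type u) [Preorder L] : TopologicalSpace L :=
  TopologicalSpace.generateFrom {U | ScottOpen U}

/-- The Lawson topology `λ(L) = σ(L) ∨ ω(L)`. -/
def lawsonTop (L : Type u) [Preorder L] : TopologicalSpace L :=
  TopologicalSpace.generateFrom ({U | ScottOpen U} ∪ {V | ∃ x : L, V = (upSet {x})ᶜ})

/-- Meet-continuity of a dcpo. -/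
def MeetContinuous (L : Type u) [PartialOrder L] : Prop :=
  ∀ x : L, ∀ D : Set L, D.Nonempty → DirectedOn (· ≤ ·) D →
    ∀ s, IsLUB D s → x ≤ s → x ∈ @closure L (scottTop L) (downSet {x} ∩ downSet D)

/-- Continuous domain: `⇓x` is nonempty, directed, with supremum `x`. -/
def ContinuousDomain (L : Type u) [PartialOrder L] : Prop :=
  IsDcpo L ∧ ∀ x : L, {y : L | WayBelowSet {y} x}.Nonempty ∧
    DirectedOn (· ≤ ·) {y : L | WayBelowSet {y} x} ∧ IsLUB {y : L | WayBelowSet {y} x} x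

/-- The poset `L = ℕ ∪ {a, ∞}` of Example 1: `ℕ` with its usual order, `a` comparable only
with itself and `∞`, and `∞` the top element. -/
abbrev ExampleL : Type := WithTop (ℕ ⊕ PUnit)

/-- The point `n ∈ ℕ` inside `ExampleL`. -/
def natPt (n : ℕ) : ExampleL := ((Sum.inl n : ℕ ⊕ PUnit) : ExampleL)

/-- The point `a` of `ExampleL`. -/
def aPt : ExampleL := ((Sum.inr PUnit.unit : ℕ ⊕ PUnit) : ExampleL)

/-- The net with `x_{2n} = n` and `x_{2n+1} = a`. -/
def xnet (n : ℕ) : ExampleL := if n % 2 = 0 then natPt (n / 2) else aPt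

/-- The ideal `I₀ = {A ⊆ ℕ : ∃ k, A ∩ {m : k ≤ m} = ∅}` on `ℕ`. -/
def idealI0 : Set (Set ℕ) := {A | ∃ k : ℕ, A ∩ {m | k ≤ m} = ∅}

/-- **Example 1.** In `L = ℕ ∪ {a, ∞}` with the indicated order, the net `(x_n)` with
`x_{2n} = n`, `x_{2n+1} = a` GZS-converges to `a` w.r.t. `I₀`, but does not
IS-converge to `a` w.r.t. `I₀`. -/
lemma exampleL_le_iff (x y : ExampleL) : x ≤ y ↔ (x = y ∨ y = (⊤ : ExampleL) ∨
    ∃ m n : ℕ, x = natPt m ∧ y = natPt n ∧ m ≤ n) := by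
  constructor
  · intro h
    match x, y with
    | _, ⊤ => exact Or.inr (Or.inl rfl)
    | ⊤, (b : ℕ ⊕ PUnit) => exact absurd h (by simp)
    | (a : ℕ ⊕ PUnit), (b : ℕ ⊕ PUnit) =>
      rw [WithTop.coe_le_coe] at h
      cases h with
      | inl h => exact Or.inr (Or.inr ⟨_, _, rfl, rfl, h⟩)
      | inr h =>
        left
        cases h
        rfl
  · rintro (rfl | rfl | ⟨m, n, rfl, rfl, h⟩)
    · exact le_refl _
    · exact le_top
    · exact WithTop.coe_le_coe.mpr (Sum.LiftRel.inl h)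

lemma natPt_le_iff (m : ℕ) (y : ExampleL) :
    natPt m ≤ y ↔ y = ⊤ ∨ ∃ n : ℕ, y = natPt n ∧ m ≤ n := by
  rw [exampleL_le_iff]
  constructor
  · rintro (rfl | rfl | ⟨m', n, hm, rfl, h⟩)
    · exact Or.inr ⟨m, rfl, le_refl m⟩
    · exact Or.inl rfl
    · exact Or.inr ⟨n, rfl, by
        have : m = m' := by simpa [natPt] using hm
        omega⟩
  · rintro (rfl | ⟨n, rfl, h⟩)
    · exact Or.inr (Or.inl rfl)
    · exact Or.inr (Or.inr ⟨m, n, rfl, rfl, h⟩)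

lemma le_aPt_iff (y : ExampleL) : y ≤ aPt ↔ y = aPt := by
  rw [exampleL_le_iff]
  constructor
  · rintro (rfl | h | ⟨m, n, rfl, hn, _⟩)
    · rfl
    · exact absurd h (by simp [aPt])
    · exact absurd hn (by simp [aPt, natPt])
  · rintro rfl; exact Or.inl rfl

lemma aPt_le_iff (y : ExampleL) : aPt ≤ y ↔ y = aPt ∨ y = ⊤ := by
  rw [exampleL_le_iff]
  constructor
  · rintro (rfl | rfl | ⟨m, n, hm, _, _⟩)
    · exact Or.inl rfl
    · exact Or.inr rfl
    · exact absurd hm (by simp [aPt, natPt])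
  · rintro (rfl | rfl)
    · exact Or.inl rfl
    · exact Or.inr (Or.inl rfl)

theorem example1 :
    (∀ x y : ExampleL, x ≤ y ↔ (x = y ∨ y = (⊤ : ExampleL) ∨
        ∃ m n : ℕ, x = natPt m ∧ y = natPt n ∧ m ≤ n)) ∧
    GZSConv xnet idealI0 aPt ∧ ¬ ISConv xnet idealI0 aPt := by
  refine ⟨exampleL_le_iff, ?_, ?_⟩
  · -- GZS-convergence via family {{a, n} : n ∈ ℕ}
    refine ⟨{F | ∃ n : ℕ, F = {aPt, natPt n}}, ⟨⟨{aPt, natPt 0}, ⟨0, rfl⟩⟩, ?_, ?_⟩, ?_, ?_⟩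
    · rintro F ⟨n, rfl⟩
      exact ⟨⟨aPt, by simp⟩, (Set.finite_singleton _).insert _⟩
    · rintro E ⟨m, rfl⟩ F ⟨n, rfl⟩
      refine ⟨{aPt, natPt (max m n)}, ⟨max m n, rfl⟩, ?_⟩
      rintro y ⟨z, hz, hzy⟩
      simp only [Set.mem_insert_iff, Set.mem_singleton_iff] at hz
      constructor
      all_goals rcases hz with rfl | rfl
      · exact ⟨aPt, by simp, hzy⟩
      · exact ⟨natPt m, by simp, le_trans (WithTop.coe_le_coe.mpr
          (Sum.LiftRel.inl (le_max_left m n))) hzy⟩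
      · exact ⟨aPt, by simp, hzy⟩
      · exact ⟨natPt n, by simp, le_trans (WithTop.coe_le_coe.mpr
          (Sum.LiftRel.inl (le_max_right m n))) hzy⟩
    · intro y hy
      simp only [Set.mem_iInter] at hy
      refine ⟨aPt, rfl, ?_⟩
      match y with
      | ⊤ => exact le_top
      | ((Sum.inr PUnit.unit : ℕ ⊕ PUnit) : ExampleL) => exact le_refl _
      | ((Sum.inl k : ℕ ⊕ PUnit) : ExampleL) =>
        exfalso
        obtain ⟨z, hz, hzy⟩ := hy {aPt, natPt (k+1)} ⟨k+1, rfl⟩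
        simp only [Set.mem_insert_iff, Set.mem_singleton_iff] at hz
        rcases hz with rfl | rfl
        · rw [show ((Sum.inl k : ℕ ⊕ PUnit) : ExampleL) = natPt k from rfl,
            aPt_le_iff] at hzy
          rcases hzy with h | h <;> simp [aPt, natPt] at h
        · rw [show ((Sum.inl k : ℕ ⊕ PUnit) : ExampleL) = natPt k from rfl,
            natPt_le_iff] at hzy
          rcases hzy with h | ⟨n, hn, hle⟩
          · exact WithTop.coe_ne_top h
          · have : n = k := by simpa [natPt] using hn.symm
            omega
    · rintro F ⟨n, rfl⟩
      refine ⟨2 * n, ?_⟩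
      ext j
      simp only [Set.mem_inter_iff, Set.mem_setOf_eq, Set.mem_empty_iff_false, iff_false]
      rintro ⟨hbad, hj⟩
      apply hbad
      unfold xnet
      by_cases h : j % 2 = 0
      · simp only [h, if_true]
        exact ⟨natPt n, by simp, WithTop.coe_le_coe.mpr (Sum.LiftRel.inl (by omega))⟩
      · simp only [h, if_false]
        exact ⟨aPt, by simp, le_refl _⟩
  · -- no IS-convergence
    rintro ⟨D, ⟨d, hd⟩, _, _, hD⟩
    obtain ⟨k, hk⟩ := hD d hd
    have hmem : ∀ j, k ≤ j → xnet j ∈ upSet {d} := by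
      intro j hj
      by_contra h
      have : j ∈ ({j | xnet j ∉ upSet {d}} : Set ℕ) ∩ {m | k ≤ m} := ⟨h, hj⟩
      rw [hk] at this
      exact this
    -- odd index forces d = aPt
    have hodd := hmem (2 * k + 1) (by omega)
    have hda : d = aPt := by
      obtain ⟨z, hz, hle⟩ := hodd
      rw [Set.mem_singleton_iff] at hz
      subst hz
      have : xnet (2 * k + 1) = aPt := by unfold xnet; rw [if_neg (by omega)]
      rw [this, le_aPt_iff] at hle
      exact hle
    -- even index contradicts
    have heven := hmem (2 * k) (by omega)
    obtain ⟨z, hz, hle⟩ := heven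
    rw [Set.mem_singleton_iff] at hz
    subst hz
    have hx : xnet (2 * k) = natPt k := by
      unfold xnet; rw [if_pos (by omega)]; congr 1; omega
    rw [hx, hda, aPt_le_iff] at hle
    rcases hle with h | h <;> simp [aPt, natPt] at h
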